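/- arXiv:2005.05771 — 2 statements merged into one kernel-verified Lean document; each statement's English description precedes it below -/
import Mathlib

section
/- For every integer n ≥ 0, the operators 𝐓^{n+1}(𝐈 − 𝐏)(𝐓*)^{n+1} (the covariance operator of the n-times left-integrated pinned Brownian sheet 𝐁^[0ⁿ]) and (𝐈 − 𝐏)𝐓^{n+1}(𝐓*)^{n+1}(𝐈 − 𝐏) (the covariance operator of the centered n-times left-integrated Brownian sheet) on L²([0,1]^d) have the same nonzero eigenvalues with multiplicities. -/
open MeasureTheory

noncomputable section

/-- Lebesgue measure on the cube `[0,1]^d`, as a measure on `ℝ^d`. -/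
def cubeMeasure (d : ℕ) : Measure (Fin d → ℝ) :=
  Measure.pi fun _ => volume.restrict (Set.Icc (0:ℝ) 1)

/-- `A` and `B` have the same nonzero eigenvalues with multiplicities. -/
def SameNonzeroEigenvalues {H : Type*} [NormedAddCommGroup H] [NormedSpace ℂ H]
    (A B : H →L[ℂ] H) : Prop :=
  ∀ l : ℂ, l ≠ 0 → ∀ m : ℕ, 1 ≤ m →
    Module.rank ℂ (LinearMap.ker (((A - l • 1) ^ m : H →L[ℂ] H) : H →ₗ[ℂ] H)) =
    Module.rank ℂ (LinearMap.ker (((B - l • 1) ^ m : H →L[ℂ] H) : H →ₗ[ℂ] H))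

/-! ### Auxiliary algebraic lemmas -/

section AlgAux

variable {M : Type*} [Monoid M]

private lemma aux_pow_comm {c f g : M} (h : c * f = g * c) :
    ∀ m : ℕ, c * f ^ m = g ^ m * c
  | 0 => by simp
  | m + 1 => by
    rw [pow_succ, pow_succ, ← mul_assoc, aux_pow_comm h m, mul_assoc, h, ← mul_assoc]

private lemma aux_conj_mul {R : M} (hR : R * R = 1) (X Y : M) :
    (R * X * R) * (R * Y * R) = R * (X * Y) * R := by
  have h' : ∀ z : M, R * (R * z) = z := fun z => by rw [← mul_assoc, hR, one_mul]
  simp [mul_assoc, h']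

private lemma aux_conj_pow {R : M} (hR : R * R = 1) (X : M) :
    ∀ k : ℕ, R * X ^ k * R = (R * X * R) ^ k
  | 0 => by simpa using hR
  | k + 1 => by
    rw [pow_succ, pow_succ, ← aux_conj_pow hR X k, ← aux_conj_mul hR (X ^ k) X]

end AlgAux

section RankAux

variable {H : Type*} [NormedAddCommGroup H] [NormedSpace ℂ H]

private lemma aux_rank_ker_le (F G C : H →L[ℂ] H) (hcomm : C * F = G * C)
    (hinj : ∀ x : H, F x = 0 → C x = 0 → x = 0) :
    Module.rank ℂ (LinearMap.ker (F : H →ₗ[ℂ] H)) ≤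
      Module.rank ℂ (LinearMap.ker (G : H →ₗ[ℂ] H)) := by
  have happ : ∀ x : H, C (F x) = G (C x) := fun x => by
    have := congrArg (fun Z : H →L[ℂ] H => Z x) hcomm
    simpa [ContinuousLinearMap.mul_apply] using this
  have hmem : ∀ x : H, x ∈ LinearMap.ker (F : H →ₗ[ℂ] H) →
      C x ∈ LinearMap.ker (G : H →ₗ[ℂ] H) := by
    intro x hx
    have hx' : F x = 0 := LinearMap.mem_ker.mp hx
    exact LinearMap.mem_ker.mpr (show G (C x) = 0 by rw [← happ, hx', map_zero])
  let φ : (LinearMap.ker (F : H →ₗ[ℂ] H)) →ₗ[ℂ] (LinearMap.ker (G : H →ₗ[ℂ] H)) :=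
    { toFun := fun x => ⟨C x.1, hmem x.1 x.2⟩
      map_add' := fun x y => by ext; simp
      map_smul' := fun c x => by ext; simp }
  have hφ : Function.Injective φ := by
    intro x y hxy
    have h1 : C x.1 = C y.1 := congrArg Subtype.val hxy
    have h1' : C (x.1 - y.1) = 0 := by simp [map_sub, h1]
    have h2 : F (x.1 - y.1) = 0 := by
      have hx : F x.1 = 0 := LinearMap.mem_ker.mp x.2
      have hy : F y.1 = 0 := LinearMap.mem_ker.mp y.2
      simp [map_sub, hx, hy]
    exact Subtype.ext (sub_eq_zero.mp (hinj _ h2 h1'))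
  exact φ.rank_le_of_injective hφ

/-- `AB` and `BA` have kernels of `(⋅ - l)^m` of the same rank, for `l ≠ 0`. -/
private lemma aux_rank_ker_pow_eq (A B : H →L[ℂ] H) {l : ℂ} (hl : l ≠ 0) (m : ℕ) :
    Module.rank ℂ (LinearMap.ker (((A * B - l • 1) ^ m : H →L[ℂ] H) : H →ₗ[ℂ] H)) =
    Module.rank ℂ (LinearMap.ker (((B * A - l • 1) ^ m : H →L[ℂ] H) : H →ₗ[ℂ] H)) := by
  have key : ∀ A B : H →L[ℂ] H,
      Module.rank ℂ (LinearMap.ker (((A * B - l • 1) ^ m : H →L[ℂ] H) : H →ₗ[ℂ] H)) ≤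
      Module.rank ℂ (LinearMap.ker (((B * A - l • 1) ^ m : H →L[ℂ] H) : H →ₗ[ℂ] H)) := by
    intro A B
    have hcomm1 : B * (A * B - l • 1) = (B * A - l • 1) * B := by
      simp [mul_sub, sub_mul, mul_smul_comm, smul_mul_assoc, mul_assoc]
    refine aux_rank_ker_le _ _ B (aux_pow_comm hcomm1 m) ?_
    intro x hFx hBx
    have hkey : ∀ k : ℕ, ((A * B - l • 1) ^ k) x = (-l) ^ k • x := by
      intro k
      induction k with
      | zero => simp
      | succ k ih =>
        have h1 : (A * B - l • 1) x = (-l) • x := by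
          simp [ContinuousLinearMap.sub_apply, ContinuousLinearMap.mul_apply, hBx,
            ContinuousLinearMap.smul_apply, ContinuousLinearMap.one_apply, neg_smul]
        rw [pow_succ, ContinuousLinearMap.mul_apply, h1, _root_.map_smul, ih, smul_smul,
          ← pow_succ']
    have h0 : (0 : H) = (-l) ^ m • x := by rw [← hkey m, hFx]
    have hne : (-l) ^ m ≠ 0 := pow_ne_zero _ (neg_ne_zero.mpr hl)
    rcases smul_eq_zero.mp h0.symm with h | h
    · exact absurd h hne
    · exact h
  exact le_antisymm (key A B) (key B A)

/-- Conjugation by an involution preserves the ranks of the kernels. -/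
private lemma aux_rank_ker_conj (R S : H →L[ℂ] H) (hR : R * R = 1) (l : ℂ) (m : ℕ) :
    Module.rank ℂ (LinearMap.ker (((R * S * R - l • 1) ^ m : H →L[ℂ] H) : H →ₗ[ℂ] H)) =
    Module.rank ℂ (LinearMap.ker (((S - l • 1) ^ m : H →L[ℂ] H) : H →ₗ[ℂ] H)) := by
  have h' : ∀ z : H →L[ℂ] H, R * (R * z) = z := fun z => by rw [← mul_assoc, hR, one_mul]
  have hinjR : ∀ x : H, R x = 0 → x = 0 := by
    intro x hx
    calc x = (1 : H →L[ℂ] H) x := rfl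
    _ = (R * R) x := by rw [hR]
    _ = R (R x) := rfl
    _ = 0 := by rw [hx, map_zero]
  refine le_antisymm ?_ ?_
  · have hcomm : R * (R * S * R - l • 1) = (S - l • 1) * R := by
      simp [mul_sub, sub_mul, mul_smul_comm, smul_mul_assoc, mul_assoc, h', hR]
    exact aux_rank_ker_le _ _ R (aux_pow_comm hcomm m) (fun x _ h2 => hinjR x h2)
  · have hcomm : R * (S - l • 1) = (R * S * R - l • 1) * R := by
      simp [mul_sub, sub_mul, mul_smul_comm, smul_mul_assoc, mul_assoc, h', hR]
    exact aux_rank_ker_le _ _ R (aux_pow_comm hcomm m) (fun x _ h2 => hinjR x h2)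

end RankAux

/-! ### The reflection `x ↦ 1 - x` of the cube -/

/-- The reflection `x ↦ 1 - x` of `ℝ^d` as a measurable equivalence. -/
def cubeRefl (d : ℕ) : (Fin d → ℝ) ≃ᵐ (Fin d → ℝ) where
  toFun x i := 1 - x i
  invFun x i := 1 - x i
  left_inv x := funext fun i => by simp
  right_inv x := funext fun i => by simp
  measurable_toFun :=
    measurable_pi_lambda _ fun i => measurable_const.sub (measurable_pi_apply i)
  measurable_invFun :=
    measurable_pi_lambda _ fun i => measurable_const.sub (measurable_pi_apply i)

lemma cubeRefl_apply (d : ℕ) (x : Fin d → ℝ) (i : Fin d) : cubeRefl d x i = 1 - x i := rfl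

lemma cubeRefl_involutive (d : ℕ) (x : Fin d → ℝ) : cubeRefl d (cubeRefl d x) = x := by
  funext i
  show 1 - (1 - x i) = x i
  ring

lemma cubeRefl_measurePreserving (d : ℕ) :
    MeasurePreserving (cubeRefl d) (cubeMeasure d) (cubeMeasure d) := by
  have h0 : MeasurePreserving (fun y : ℝ => 1 - y) volume volume :=
    Measure.measurePreserving_sub_left volume 1
  have hpre : (fun y : ℝ => 1 - y) ⁻¹' (Set.Icc 0 1) = Set.Icc 0 1 := by
    ext y
    simp only [Set.mem_preimage, Set.mem_Icc]
    constructor <;> (rintro ⟨h1, h2⟩; constructor <;> linarith)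
  have h1 : MeasurePreserving (fun y : ℝ => 1 - y)
      (volume.restrict (Set.Icc (0:ℝ) 1)) (volume.restrict (Set.Icc (0:ℝ) 1)) := by
    have := h0.restrict_preimage (measurableSet_Icc : MeasurableSet (Set.Icc (0:ℝ) 1))
    rwa [hpre] at this
  exact measurePreserving_pi _ _ (fun _ => h1)

lemma cubeRefl_preimage_Icc (d : ℕ) (x : Fin d → ℝ) :
    (cubeRefl d) ⁻¹' (Set.Icc (cubeRefl d x) 1) = Set.Icc 0 x := by
  ext y
  simp only [Set.mem_preimage, Set.mem_Icc, Pi.le_def, cubeRefl_apply, Pi.one_apply,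
    Pi.zero_apply]
  constructor
  · rintro ⟨h1, h2⟩
    exact ⟨fun i => by have := h2 i; linarith, fun i => by have := h1 i; linarith⟩
  · rintro ⟨h1, h2⟩
    exact ⟨fun i => by have := h2 i; linarith, fun i => by have := h1 i; linarith⟩

instance cubeMeasure_probability (d : ℕ) : IsProbabilityMeasure (cubeMeasure d) := by
  have : IsProbabilityMeasure (volume.restrict (Set.Icc (0:ℝ) 1)) :=
    ⟨by simp [Real.volume_Icc]⟩
  unfold cubeMeasure
  infer_instance

set_option maxHeartbeats 2000000 in
/-- For every `n ≥ 0`, the operators `𝐓ⁿ⁺¹(𝐈-𝐏)(𝐓*)ⁿ⁺¹` (covariance of the `n`-times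
left-integrated pinned Brownian sheet) and `(𝐈-𝐏)𝐓ⁿ⁺¹(𝐓*)ⁿ⁺¹(𝐈-𝐏)` (covariance of the
centered `n`-times left-integrated Brownian sheet) on `L²([0,1]^d)` have the same nonzero
eigenvalues with multiplicities. -/
theorem statement15 (d : ℕ) (hd : 1 ≤ d) (n : ℕ)
    (T Tstar P : Lp ℂ 2 (cubeMeasure d) →L[ℂ] Lp ℂ 2 (cubeMeasure d))
    (hT : ∀ u : Lp ℂ 2 (cubeMeasure d), ∀ᵐ x ∂(cubeMeasure d),
      T u x = ∫ y in Set.Icc 0 x, u y ∂(cubeMeasure d))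
    (hTstar : ∀ u : Lp ℂ 2 (cubeMeasure d), ∀ᵐ x ∂(cubeMeasure d),
      Tstar u x = ∫ y in Set.Icc x 1, u y ∂(cubeMeasure d))
    (hP : ∀ u : Lp ℂ 2 (cubeMeasure d), ∀ᵐ x ∂(cubeMeasure d),
      P u x = ∫ y, u y ∂(cubeMeasure d)) :
    SameNonzeroEigenvalues
      (T ^ (n + 1) * (1 - P) * Tstar ^ (n + 1))
      ((1 - P) * T ^ (n + 1) * Tstar ^ (n + 1) * (1 - P)) := by
  classical
  have hmp : MeasurePreserving (cubeRefl d) (cubeMeasure d) (cubeMeasure d) := cubeRefl_measurePreserving d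
  have hemb : MeasurableEmbedding (cubeRefl d) := (cubeRefl d).measurableEmbedding
  have hqmp := hmp.quasiMeasurePreserving
  -- the reflection operator on L²
  set R : Lp ℂ 2 (cubeMeasure d) →L[ℂ] Lp ℂ 2 (cubeMeasure d) :=
    (Lp.compMeasurePreservingₗᵢ ℂ (cubeRefl d) hmp).toContinuousLinearMap with hRdef
  have hRcoe : ∀ u : Lp ℂ 2 (cubeMeasure d), ⇑(R u) =ᵐ[cubeMeasure d] ⇑u ∘ ⇑(cubeRefl d) := fun u =>
    Lp.coeFn_compMeasurePreserving u hmp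
  -- R is an involution
  have hRR : R * R = 1 := by
    ext u
    have h2 : ⇑(R (R u)) =ᵐ[cubeMeasure d] ⇑(R u) ∘ ⇑(cubeRefl d) := hRcoe (R u)
    have h3 : ∀ᵐ x ∂(cubeMeasure d), (R u) (cubeRefl d x) = u (cubeRefl d (cubeRefl d x)) :=
      hqmp.ae (hRcoe u)
    filter_upwards [h2, h3] with x hx2 hx3
    show (R (R u)) x = u x
    rw [hx2]
    show (R u) (cubeRefl d x) = u x
    rw [hx3, cubeRefl_involutive]
  -- P is idempotent
  have hPP : P * P = P := by
    ext u
    have hc : ∫ y, (P u) y ∂(cubeMeasure d) = ∫ y, u y ∂(cubeMeasure d) := by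
      rw [integral_congr_ae (hP u)]
      simp
    filter_upwards [hP (P u), hP u] with x hx1 hx2
    show (P (P u)) x = (P u) x
    rw [hx1, hc, hx2]
  -- R conjugates T to Tstar
  have hRTR : R * T * R = Tstar := by
    ext u
    have hstep : ∀ x : Fin d → ℝ, ∫ y in Set.Icc 0 x, (R u) y ∂(cubeMeasure d) =
        ∫ y in Set.Icc (cubeRefl d x) 1, u y ∂(cubeMeasure d) := by
      intro x
      rw [integral_congr_ae (ae_restrict_of_ae (hRcoe u)), ← cubeRefl_preimage_Icc d x]
      exact hmp.setIntegral_preimage_emb hemb _ _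
    have hmain : ∀ᵐ x ∂(cubeMeasure d), (T (R u)) x = ∫ y in Set.Icc (cubeRefl d x) 1, u y ∂(cubeMeasure d) := by
      filter_upwards [hT (R u)] with x hx
      rw [hx, hstep x]
    have hpull : ∀ᵐ x ∂(cubeMeasure d), (T (R u)) (cubeRefl d x) =
        ∫ y in Set.Icc (cubeRefl d (cubeRefl d x)) 1, u y ∂(cubeMeasure d) := hqmp.ae hmain
    filter_upwards [hRcoe (T (R u)), hpull, hTstar u] with x hx1 hx2 hx3
    show (R (T (R u))) x = (Tstar u) x
    rw [hx1]
    show (T (R u)) (cubeRefl d x) = (Tstar u) x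
    rw [hx2, cubeRefl_involutive, hx3]
  -- R commutes with P
  have hRPR : R * P * R = P := by
    ext u
    have hint : ∫ y, (R u) y ∂(cubeMeasure d) = ∫ y, u y ∂(cubeMeasure d) := by
      rw [integral_congr_ae (hRcoe u)]
      exact hmp.integral_comp hemb _
    have hpull : ∀ᵐ x ∂(cubeMeasure d), (P (R u)) (cubeRefl d x) = ∫ y, (R u) y ∂(cubeMeasure d) :=
      hqmp.ae (hP (R u))
    filter_upwards [hRcoe (P (R u)), hpull, hP u] with x hx1 hx2 hx3
    show (R (P (R u))) x = (P u) x
    rw [hx1]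
    show (P (R u)) (cubeRefl d x) = (P u) x
    rw [hx2, hint, hx3]
  -- consequences
  have hQQ : ((1 : Lp ℂ 2 (cubeMeasure d) →L[ℂ] Lp ℂ 2 (cubeMeasure d)) - P) * (1 - P) = 1 - P := by
    have h : ((1 : Lp ℂ 2 (cubeMeasure d) →L[ℂ] Lp ℂ 2 (cubeMeasure d)) - P) * (1 - P) = 1 - P - P + P * P := by
      noncomm_ring
    rw [h, hPP]
    abel
  have hRQR : R * (1 - P) * R = 1 - P := by
    have h : R * ((1 : Lp ℂ 2 (cubeMeasure d) →L[ℂ] Lp ℂ 2 (cubeMeasure d)) - P) * R = R * R - R * P * R := by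
      noncomm_ring
    rw [h, hRR, hRPR]
  have hRTstarR : R * Tstar * R = T := by
    have h' : ∀ z : Lp ℂ 2 (cubeMeasure d) →L[ℂ] Lp ℂ 2 (cubeMeasure d), R * (R * z) = z := fun z => by
      rw [← mul_assoc, hRR, one_mul]
    rw [← hRTR]
    simp [mul_assoc, h', hRR]
  have hRUR : R * T ^ (n + 1) * R = Tstar ^ (n + 1) := by
    rw [aux_conj_pow hRR T (n + 1), hRTR]
  have hRVR : R * Tstar ^ (n + 1) * R = T ^ (n + 1) := by
    rw [aux_conj_pow hRR Tstar (n + 1), hRTstarR]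
  -- conjugation identity
  have e1 : R * ((1 - P) * T ^ (n + 1)) * R = (1 - P) * Tstar ^ (n + 1) := by
    rw [← aux_conj_mul hRR (1 - P) (T ^ (n + 1)), hRQR, hRUR]
  have e2 : R * ((1 - P) * T ^ (n + 1) * Tstar ^ (n + 1)) * R =
      (1 - P) * Tstar ^ (n + 1) * T ^ (n + 1) := by
    rw [show (1 - P) * T ^ (n + 1) * Tstar ^ (n + 1)
        = ((1 - P) * T ^ (n + 1)) * Tstar ^ (n + 1) from rfl,
      ← aux_conj_mul hRR ((1 - P) * T ^ (n + 1)) (Tstar ^ (n + 1)), e1, hRVR]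
  have e3 : R * ((1 - P) * T ^ (n + 1) * Tstar ^ (n + 1) * (1 - P)) * R =
      (1 - P) * Tstar ^ (n + 1) * T ^ (n + 1) * (1 - P) := by
    rw [show (1 - P) * T ^ (n + 1) * Tstar ^ (n + 1) * (1 - P)
        = ((1 - P) * T ^ (n + 1) * Tstar ^ (n + 1)) * (1 - P) from rfl,
      ← aux_conj_mul hRR ((1 - P) * T ^ (n + 1) * Tstar ^ (n + 1)) (1 - P), e2, hRQR]
  -- assemble
  intro l hl m hm
  have h'' : ∀ z : Lp ℂ 2 (cubeMeasure d) →L[ℂ] Lp ℂ 2 (cubeMeasure d), (1 - P) * ((1 - P) * z) = (1 - P) * z :=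
    fun z => by rw [← mul_assoc, hQQ]
  have eAB : (T ^ (n + 1) * (1 - P)) * ((1 - P) * Tstar ^ (n + 1)) =
      T ^ (n + 1) * (1 - P) * Tstar ^ (n + 1) := by
    simp [mul_assoc, h'']
  have step1 := aux_rank_ker_pow_eq (T ^ (n + 1) * (1 - P)) ((1 - P) * Tstar ^ (n + 1)) hl m
  rw [eAB] at step1
  have eBA : ((1 - P) * Tstar ^ (n + 1)) * (T ^ (n + 1) * (1 - P)) =
      R * ((1 - P) * T ^ (n + 1) * Tstar ^ (n + 1) * (1 - P)) * R := by
    rw [e3]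
    exact (mul_assoc _ _ _).symm
  rw [eBA] at step1
  exact step1.trans
    (aux_rank_ker_conj R ((1 - P) * T ^ (n + 1) * Tstar ^ (n + 1) * (1 - P)) hRR l m)
end
end

section
/- On L²([0,1]^d): (i) the operators 𝐓(𝐈 − 𝐏)𝐓(𝐈 − 𝐏)𝐓*(𝐈 − 𝐏)𝐓* (the covariance operator of the left-integrated centered pinned Brownian sheet 𝐁^{0}) and (𝐈 − 𝐏)𝐓(𝐈 − 𝐏)𝐓𝐓*(𝐈 − 𝐏)𝐓*(𝐈 − 𝐏) (the covariance operator of the centered left-integrated centered Brownian sheet) have the same nonzero eigenvalues with multiplicities; (ii) likewise, 𝐓*(𝐈 − 𝐏)𝐓(𝐈 − 𝐏)𝐓*(𝐈 − 𝐏)𝐓 and (𝐈 − 𝐏)𝐓*(𝐈 − 𝐏)𝐓𝐓*(𝐈 − 𝐏)𝐓(𝐈 − 𝐏) (the right-integrated versions) have the same nonzero eigenvalues with multiplicities. -/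
open MeasureTheory

noncomputable section

namespace Statement16Aux

variable {H : Type*} [NormedAddCommGroup H] [NormedSpace ℂ H]

lemma pow_mul_comm_aux (A B : H →L[ℂ] H) (l : ℂ) (m : ℕ) :
    (B * A - l • 1) ^ m * B = B * (A * B - l • 1) ^ m := by
  induction m with
  | zero => simp
  | succ n ih =>
      have h : (B * A - l • 1) * B = B * (A * B - l • 1) := by
        simp [sub_mul, mul_sub, mul_assoc, mul_smul_comm, smul_mul_assoc]
      rw [pow_succ, mul_assoc, h, ← mul_assoc, ih, mul_assoc, ← pow_succ]

lemma apply_pow_of_ker (A B : H →L[ℂ] H) (l : ℂ) (n : ℕ) (v : H) (hv : B v = 0) :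
    ((A * B - l • 1) ^ n) v = ((-l) ^ n) • v := by
  induction n with
  | zero => simp
  | succ n ih =>
      have h1 : (A * B - l • 1) v = (-l) • v := by
        simp [ContinuousLinearMap.sub_apply, ContinuousLinearMap.mul_apply, hv, neg_smul]
      rw [pow_succ, ContinuousLinearMap.mul_apply, h1, _root_.map_smul, ih, smul_smul, ← pow_succ']

lemma eigen_le (A B : H →L[ℂ] H) (l : ℂ) (hl : l ≠ 0) (m : ℕ) :
    Module.rank ℂ (LinearMap.ker (((A * B - l • 1) ^ m : H →L[ℂ] H) : H →ₗ[ℂ] H)) ≤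
    Module.rank ℂ (LinearMap.ker (((B * A - l • 1) ^ m : H →L[ℂ] H) : H →ₗ[ℂ] H)) := by
  have hmem : ∀ v : H, v ∈ LinearMap.ker (((A * B - l • 1) ^ m : H →L[ℂ] H) : H →ₗ[ℂ] H) →
      B v ∈ LinearMap.ker (((B * A - l • 1) ^ m : H →L[ℂ] H) : H →ₗ[ℂ] H) := by
    intro v hv
    rw [LinearMap.mem_ker, ContinuousLinearMap.coe_coe] at hv ⊢
    have : ((B * A - l • 1) ^ m * B) v = (B * ((A * B - l • 1) ^ m)) v := by
      rw [pow_mul_comm_aux]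
    rw [ContinuousLinearMap.mul_apply, ContinuousLinearMap.mul_apply, hv, map_zero] at this
    exact this
  let f : LinearMap.ker (((A * B - l • 1) ^ m : H →L[ℂ] H) : H →ₗ[ℂ] H) →ₗ[ℂ]
      LinearMap.ker (((B * A - l • 1) ^ m : H →L[ℂ] H) : H →ₗ[ℂ] H) :=
    { toFun := fun x => ⟨B x.1, hmem x.1 x.2⟩
      map_add' := fun x y => Subtype.ext (by simp)
      map_smul' := fun c x => Subtype.ext (by simp) }
  have hinj : Function.Injective f := by
    intro x y hxy
    have hBeq : B x.1 = B y.1 := congrArg Subtype.val hxy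
    have hB : B (x.1 - y.1) = 0 := by
      rw [map_sub, hBeq, sub_self]
    have hker : (x.1 - y.1) ∈ LinearMap.ker (((A * B - l • 1) ^ m : H →L[ℂ] H) : H →ₗ[ℂ] H) :=
      sub_mem x.2 y.2
    rw [LinearMap.mem_ker, ContinuousLinearMap.coe_coe] at hker
    rw [apply_pow_of_ker A B l m _ hB] at hker
    have : x.1 - y.1 = 0 := by
      rcases smul_eq_zero.mp hker with h | h
      · exact absurd h (pow_ne_zero _ (neg_ne_zero.mpr hl))
      · exact h
    exact Subtype.ext (sub_eq_zero.mp this)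
  exact LinearMap.rank_le_of_injective f hinj

lemma sne_mul (A B : H →L[ℂ] H) : SameNonzeroEigenvalues (A * B) (B * A) :=
  fun l hl m _ => le_antisymm (eigen_le A B l hl m) (eigen_le B A l hl m)

lemma sne_trans {A B C : H →L[ℂ] H} (h1 : SameNonzeroEigenvalues A B)
    (h2 : SameNonzeroEigenvalues B C) : SameNonzeroEigenvalues A C :=
  fun l hl m hm => (h1 l hl m hm).trans (h2 l hl m hm)

lemma sne_of_eq {A B : H →L[ℂ] H} (h : A = B) : SameNonzeroEigenvalues A B := by
  subst h; exact fun l hl m hm => rfl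

lemma key (T T' P J : H →L[ℂ] H) (hP : P * P = P) (hJ : J * J = 1)
    (hJT : J * T * J = T') (hJT' : J * T' * J = T) (hJP : J * P * J = P) :
    SameNonzeroEigenvalues (T * (1 - P) * T * (1 - P) * T' * (1 - P) * T')
      ((1 - P) * T * (1 - P) * T * T' * (1 - P) * T' * (1 - P)) := by
  set Q : H →L[ℂ] H := 1 - P with hQdef
  have hQ : Q * Q = Q := by
    rw [hQdef, sub_mul, one_mul, mul_sub, mul_one, hP, sub_self, sub_zero]
  have hQ' : ∀ X : H →L[ℂ] H, Q * (Q * X) = Q * X := fun X => by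
    rw [← mul_assoc, hQ]
  have hJ' : ∀ X : H →L[ℂ] H, J * (J * X) = X := fun X => by
    rw [← mul_assoc, hJ, one_mul]
  have hconj : ∀ A B : H →L[ℂ] H,
      (J * (A * J)) * (J * (B * J)) = J * ((A * B) * J) := by
    intro A B
    simp only [mul_assoc, hJ']
  have hJT2 : J * (T * J) = T' := by rw [← mul_assoc]; exact hJT
  have hJT'2 : J * (T' * J) = T := by rw [← mul_assoc]; exact hJT'
  have hJP2 : J * (P * J) = P := by rw [← mul_assoc]; exact hJP
  have hJQ : J * (Q * J) = Q := by
    rw [hQdef, sub_mul, one_mul, mul_sub, hJ, hJP2]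
  set K : H →L[ℂ] H := Q * (T * Q) with hK
  set K' : H →L[ℂ] H := Q * (T' * Q) with hK'
  have hJK : J * (K * J) = K' := by
    rw [hK, hK', ← hconj, hJQ, ← hconj, hJT2, hJQ]
  have hJK' : J * (K' * J) = K := by
    rw [hK, hK', ← hconj, hJQ, ← hconj, hJT'2, hJQ]
  -- F = (T*K) * (K'*T')
  have hF : T * Q * T * Q * T' * Q * T' = (T * K) * (K' * T') := by
    rw [hK, hK']
    simp only [mul_assoc, hQ']
  -- S = (K*T) * (T'*K')
  have hS : Q * T * Q * T * T' * Q * T' * Q = (K * T) * (T' * K') := by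
    rw [hK, hK']
    simp only [mul_assoc, hQ']
  -- chain for F
  have f1 : SameNonzeroEigenvalues ((T * K) * (K' * T')) ((K' * T') * (T * K)) :=
    sne_mul _ _
  have f2 : SameNonzeroEigenvalues ((K' * T') * (T * K)) ((T' * (T * K)) * K') := by
    have e : (K' * T') * (T * K) = K' * (T' * (T * K)) := by simp only [mul_assoc]
    exact sne_trans (sne_of_eq e) (sne_mul _ _)
  -- chain for S
  have s1 : SameNonzeroEigenvalues ((K * T) * (T' * K')) ((T' * K') * (K * T)) :=
    sne_mul _ _
  have s2 : SameNonzeroEigenvalues ((T' * K') * (K * T)) ((K' * (K * T)) * T') := by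
    have e : (T' * K') * (K * T) = T' * (K' * (K * T)) := by simp only [mul_assoc]
    exact sne_trans (sne_of_eq e) (sne_mul _ _)
  -- conjugation step : (K' * (K * T)) * T' = J * ((K * (K' * (T' * T))) * J)
  have hconj3 : J * ((K * (K' * (T' * T))) * J) = (K' * (K * T)) * T' := by
    rw [← hconj, hJK, ← hconj, hJK', ← hconj, hJT'2, hJT2]
    simp only [mul_assoc]
  have s3 : SameNonzeroEigenvalues ((K' * (K * T)) * T') (K * (K' * (T' * T))) := by
    have e : (K' * (K * T)) * T' = (J * (K * (K' * (T' * T)))) * J := by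
      rw [mul_assoc]; exact hconj3.symm
    have e2 : J * (J * (K * (K' * (T' * T)))) = K * (K' * (T' * T)) := hJ' _
    exact sne_trans (sne_of_eq e) (sne_trans (sne_mul _ _) (sne_of_eq e2))
  have s4 : SameNonzeroEigenvalues (K * (K' * (T' * T))) ((T' * (T * K)) * K') := by
    have e : K * (K' * (T' * T)) = (K * K') * (T' * T) := by simp only [mul_assoc]
    have e2 : (T' * T) * (K * K') = (T' * (T * K)) * K' := by simp only [mul_assoc]
    exact sne_trans (sne_of_eq e) (sne_trans (sne_mul _ _) (sne_of_eq e2))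
  -- assemble
  have hFchain : SameNonzeroEigenvalues (T * Q * T * Q * T' * Q * T')
      ((T' * (T * K)) * K') :=
    sne_trans (sne_of_eq hF) (sne_trans f1 f2)
  have hSchain : SameNonzeroEigenvalues (Q * T * Q * T * T' * Q * T' * Q)
      ((T' * (T * K)) * K') :=
    sne_trans (sne_of_eq hS) (sne_trans s1 (sne_trans s2 (sne_trans s3 s4)))
  have hsymm : ∀ {A B : H →L[ℂ] H}, SameNonzeroEigenvalues A B →
      SameNonzeroEigenvalues B A := fun h l hl m hm => (h l hl m hm).symm
  exact sne_trans hFchain (hsymm hSchain)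

lemma key2 (T T' P : H →L[ℂ] H) (hP : P * P = P) :
    SameNonzeroEigenvalues (T' * (1 - P) * T * (1 - P) * T' * (1 - P) * T)
      ((1 - P) * T' * (1 - P) * T * T' * (1 - P) * T * (1 - P)) := by
  set Q : H →L[ℂ] H := 1 - P with hQdef
  have hQ : Q * Q = Q := by
    rw [hQdef, sub_mul, one_mul, mul_sub, mul_one, hP, sub_self, sub_zero]
  have hQ' : ∀ X : H →L[ℂ] H, Q * (Q * X) = Q * X := fun X => by
    rw [← mul_assoc, hQ]
  set K : H →L[ℂ] H := Q * (T * Q) with hK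
  set K' : H →L[ℂ] H := Q * (T' * Q) with hK'
  have hF : T' * Q * T * Q * T' * Q * T = (T' * K) * (K' * T) := by
    rw [hK, hK']
    simp only [mul_assoc, hQ']
  have hS : Q * T' * Q * T * T' * Q * T * Q = (K' * T) * (T' * K) := by
    rw [hK, hK']
    simp only [mul_assoc, hQ']
  exact sne_trans (sne_of_eq hF)
    (sne_trans (sne_mul _ _) (sne_of_eq hS.symm))

end Statement16Aux

/-- The coordinatewise flip `x ↦ 1 - x` on `ℝ^d` as a measurable equivalence. -/
def cubeFlip (d : ℕ) : (Fin d → ℝ) ≃ᵐ (Fin d → ℝ) where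
  toEquiv :=
    { toFun := fun x i => 1 - x i
      invFun := fun x i => 1 - x i
      left_inv := fun x => by funext i; ring
      right_inv := fun x => by funext i; ring }
  measurable_toFun :=
    measurable_pi_iff.mpr fun i => measurable_const.sub (measurable_pi_apply i)
  measurable_invFun :=
    measurable_pi_iff.mpr fun i => measurable_const.sub (measurable_pi_apply i)

lemma flip1_measurePreserving :
    MeasurePreserving (fun t : ℝ => 1 - t)
      (volume.restrict (Set.Icc (0:ℝ) 1)) (volume.restrict (Set.Icc (0:ℝ) 1)) := by
  have hm : Measurable (fun t : ℝ => 1 - t) := measurable_const.sub measurable_id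
  refine ⟨hm, ?_⟩
  have h0 : (fun t : ℝ => 1 - t) ⁻¹' (Set.Icc 0 1) = Set.Icc 0 1 := by
    ext t
    simp only [Set.mem_preimage, Set.mem_Icc]
    constructor <;> (rintro ⟨a, b⟩; constructor <;> linarith)
  have h1 : Measure.map (fun t : ℝ => 1 - t) volume = volume :=
    (Measure.measurePreserving_sub_left volume 1).map_eq
  calc (volume.restrict (Set.Icc (0:ℝ) 1)).map (fun t : ℝ => 1 - t)
      = ((volume.map (fun t : ℝ => 1 - t)).restrict (Set.Icc (0:ℝ) 1)) := by
        rw [Measure.restrict_map hm measurableSet_Icc, h0]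
    _ = volume.restrict (Set.Icc (0:ℝ) 1) := by rw [h1]

lemma cubeFlip_measurePreserving (d : ℕ) :
    MeasurePreserving (cubeFlip d) (cubeMeasure d) (cubeMeasure d) :=
  measurePreserving_pi _ _ (fun _ => flip1_measurePreserving)

instance cubeMeasure_prob (d : ℕ) : IsProbabilityMeasure (cubeMeasure d) := by
  have : IsProbabilityMeasure (volume.restrict (Set.Icc (0:ℝ) 1)) :=
    ⟨by rw [Measure.restrict_apply_univ, Real.volume_Icc]; norm_num⟩
  unfold cubeMeasure
  infer_instance

lemma cubeFlip_preimage_Icc_right (d : ℕ) (x : Fin d → ℝ) :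
    (cubeFlip d) ⁻¹' (Set.Icc x 1) = Set.Icc 0 ((cubeFlip d) x) := by
  ext y
  simp only [Set.mem_preimage, Set.mem_Icc, Pi.le_def, cubeFlip, MeasurableEquiv.coe_mk,
    Equiv.coe_fn_mk, Pi.one_apply, Pi.zero_apply]
  constructor <;> rintro ⟨h1, h2⟩ <;>
    exact ⟨fun i => by linarith [h1 i, h2 i], fun i => by linarith [h1 i, h2 i]⟩

lemma cubeFlip_preimage_Icc_left (d : ℕ) (x : Fin d → ℝ) :
    (cubeFlip d) ⁻¹' (Set.Icc 0 x) = Set.Icc ((cubeFlip d) x) 1 := by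
  ext y
  simp only [Set.mem_preimage, Set.mem_Icc, Pi.le_def, cubeFlip, MeasurableEquiv.coe_mk,
    Equiv.coe_fn_mk, Pi.one_apply, Pi.zero_apply]
  constructor <;> rintro ⟨h1, h2⟩ <;>
    exact ⟨fun i => by linarith [h1 i, h2 i], fun i => by linarith [h1 i, h2 i]⟩

/-- On `L²([0,1]^d)`: (i) `𝐓(𝐈-𝐏)𝐓(𝐈-𝐏)𝐓*(𝐈-𝐏)𝐓*` (covariance of the left-integrated
centered pinned Brownian sheet) and `(𝐈-𝐏)𝐓(𝐈-𝐏)𝐓𝐓*(𝐈-𝐏)𝐓*(𝐈-𝐏)` (covariance of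
the centered left-integrated centered Brownian sheet) have the same nonzero eigenvalues
with multiplicities; (ii) likewise for the right-integrated versions
`𝐓*(𝐈-𝐏)𝐓(𝐈-𝐏)𝐓*(𝐈-𝐏)𝐓` and `(𝐈-𝐏)𝐓*(𝐈-𝐏)𝐓𝐓*(𝐈-𝐏)𝐓(𝐈-𝐏)`. -/
theorem statement16 (d : ℕ) (hd : 1 ≤ d)
    (T Tstar P : Lp ℂ 2 (cubeMeasure d) →L[ℂ] Lp ℂ 2 (cubeMeasure d))
    (hT : ∀ u : Lp ℂ 2 (cubeMeasure d), ∀ᵐ x ∂(cubeMeasure d),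
      T u x = ∫ y in Set.Icc 0 x, u y ∂(cubeMeasure d))
    (hTstar : ∀ u : Lp ℂ 2 (cubeMeasure d), ∀ᵐ x ∂(cubeMeasure d),
      Tstar u x = ∫ y in Set.Icc x 1, u y ∂(cubeMeasure d))
    (hP : ∀ u : Lp ℂ 2 (cubeMeasure d), ∀ᵐ x ∂(cubeMeasure d),
      P u x = ∫ y, u y ∂(cubeMeasure d)) :
    SameNonzeroEigenvalues
      (T * (1 - P) * T * (1 - P) * Tstar * (1 - P) * Tstar)
      ((1 - P) * T * (1 - P) * T * Tstar * (1 - P) * Tstar * (1 - P)) ∧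
    SameNonzeroEigenvalues
      (Tstar * (1 - P) * T * (1 - P) * Tstar * (1 - P) * T)
      ((1 - P) * Tstar * (1 - P) * T * Tstar * (1 - P) * T * (1 - P)) := by
  classical
  set σ : (Fin d → ℝ) → (Fin d → ℝ) := ⇑(cubeFlip d) with hσdef
  have hσmp : MeasurePreserving σ (cubeMeasure d) (cubeMeasure d) := cubeFlip_measurePreserving d
  have hemb : MeasurableEmbedding σ := (cubeFlip d).measurableEmbedding
  have hσσ : ∀ x, σ (σ x) = x := fun x => (cubeFlip d).toEquiv.left_inv x
  set J : Lp ℂ 2 (cubeMeasure d) →L[ℂ] Lp ℂ 2 (cubeMeasure d) :=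
    (Lp.compMeasurePreservingₗᵢ ℂ σ hσmp).toContinuousLinearMap with hJdef
  have hJapp : ∀ u : Lp ℂ 2 (cubeMeasure d), J u = Lp.compMeasurePreserving σ hσmp u := fun u => rfl
  have hJcoe : ∀ u : Lp ℂ 2 (cubeMeasure d), (J u : (Fin d → ℝ) → ℂ) =ᵐ[(cubeMeasure d)] (u : (Fin d → ℝ) → ℂ) ∘ σ :=
    fun u => Lp.coeFn_compMeasurePreserving u hσmp
  -- J * J = 1
  have hJJ : J * J = 1 := by
    apply ContinuousLinearMap.ext; intro u
    apply Lp.ext (μ := cubeMeasure d)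
    have c1 : ((J (J u)) : (Fin d → ℝ) → ℂ) =ᵐ[(cubeMeasure d)] ((J u : (Fin d → ℝ) → ℂ) ∘ σ) := hJcoe (J u)
    have c2 : ((J u : (Fin d → ℝ) → ℂ) ∘ σ) =ᵐ[(cubeMeasure d)] (((u : (Fin d → ℝ) → ℂ) ∘ σ) ∘ σ) :=
      hσmp.quasiMeasurePreserving.ae_eq_comp (hJcoe u)
    have c3 : (((u : (Fin d → ℝ) → ℂ) ∘ σ) ∘ σ) = (u : (Fin d → ℝ) → ℂ) := by
      funext x; simp [Function.comp, hσσ x]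
    have : ((J * J) u : (Fin d → ℝ) → ℂ) =ᵐ[(cubeMeasure d)] (u : (Fin d → ℝ) → ℂ) := by
      rw [ContinuousLinearMap.mul_apply]
      exact c1.trans (c2.trans (by rw [c3]))
    simpa using this
  -- P * P = P
  have hPP : P * P = P := by
    apply ContinuousLinearMap.ext; intro u
    apply Lp.ext (μ := cubeMeasure d)
    rw [ContinuousLinearMap.mul_apply]
    have hc : ∫ y, (P u : (Fin d → ℝ) → ℂ) y ∂(cubeMeasure d) = ∫ y, (u : (Fin d → ℝ) → ℂ) y ∂(cubeMeasure d) := by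
      rw [integral_congr_ae (hP u), integral_const, probReal_univ]
      simp
    filter_upwards [hP (P u), hP u] with x h1 h2
    rw [h1, hc, h2]
  -- J * T * J = Tstar
  have hJTJ : J * T * J = Tstar := by
    apply ContinuousLinearMap.ext; intro u
    apply Lp.ext (μ := cubeMeasure d)
    have e0 : (J * T * J) u = J (T (J u)) := rfl
    rw [e0]
    have c1 : ((J (T (J u))) : (Fin d → ℝ) → ℂ) =ᵐ[(cubeMeasure d)]
        ((T (J u) : (Fin d → ℝ) → ℂ) ∘ σ) := hJcoe (T (J u))
    have c2 : ((T (J u) : (Fin d → ℝ) → ℂ) ∘ σ) =ᵐ[(cubeMeasure d)]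
        ((fun x' => ∫ y in Set.Icc 0 x', (J u : (Fin d → ℝ) → ℂ) y ∂(cubeMeasure d)) ∘ σ) :=
      hσmp.quasiMeasurePreserving.ae_eq_comp (hT (J u))
    have c3 : ((fun x' => ∫ y in Set.Icc 0 x', (J u : (Fin d → ℝ) → ℂ) y ∂(cubeMeasure d)) ∘ σ) =
        fun x => ∫ y in Set.Icc x 1, (u : (Fin d → ℝ) → ℂ) y ∂(cubeMeasure d) := by
      funext x
      have i1 : ∫ y in Set.Icc 0 (σ x), (J u : (Fin d → ℝ) → ℂ) y ∂(cubeMeasure d) =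
          ∫ y in Set.Icc 0 (σ x), ((u : (Fin d → ℝ) → ℂ) ∘ σ) y ∂(cubeMeasure d) :=
        integral_congr_ae (ae_restrict_of_ae (hJcoe u))
      have i2 : Set.Icc (0 : Fin d → ℝ) (σ x) = σ ⁻¹' (Set.Icc x 1) :=
        (cubeFlip_preimage_Icc_right d x).symm
      have i3 := hσmp.setIntegral_preimage_emb hemb (u : (Fin d → ℝ) → ℂ) (Set.Icc x 1)
      simp only [Function.comp] at i1 ⊢
      rw [i1, i2]
      exact i3
    refine c1.trans (c2.trans ?_)
    rw [c3]
    exact Filter.EventuallyEq.symm (hTstar u)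
  -- J * Tstar * J = T
  have hJTstarJ : J * Tstar * J = T := by
    apply ContinuousLinearMap.ext; intro u
    apply Lp.ext (μ := cubeMeasure d)
    have e0 : (J * Tstar * J) u = J (Tstar (J u)) := rfl
    rw [e0]
    have c1 : ((J (Tstar (J u))) : (Fin d → ℝ) → ℂ) =ᵐ[(cubeMeasure d)]
        ((Tstar (J u) : (Fin d → ℝ) → ℂ) ∘ σ) := hJcoe (Tstar (J u))
    have c2 : ((Tstar (J u) : (Fin d → ℝ) → ℂ) ∘ σ) =ᵐ[(cubeMeasure d)]
        ((fun x' => ∫ y in Set.Icc x' 1, (J u : (Fin d → ℝ) → ℂ) y ∂(cubeMeasure d)) ∘ σ) :=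
      hσmp.quasiMeasurePreserving.ae_eq_comp (hTstar (J u))
    have c3 : ((fun x' => ∫ y in Set.Icc x' 1, (J u : (Fin d → ℝ) → ℂ) y ∂(cubeMeasure d)) ∘ σ) =
        fun x => ∫ y in Set.Icc 0 x, (u : (Fin d → ℝ) → ℂ) y ∂(cubeMeasure d) := by
      funext x
      have i1 : ∫ y in Set.Icc (σ x) 1, (J u : (Fin d → ℝ) → ℂ) y ∂(cubeMeasure d) =
          ∫ y in Set.Icc (σ x) 1, ((u : (Fin d → ℝ) → ℂ) ∘ σ) y ∂(cubeMeasure d) :=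
        integral_congr_ae (ae_restrict_of_ae (hJcoe u))
      have i2 : Set.Icc (σ x) (1 : Fin d → ℝ) = σ ⁻¹' (Set.Icc 0 x) :=
        (cubeFlip_preimage_Icc_left d x).symm
      have i3 := hσmp.setIntegral_preimage_emb hemb (u : (Fin d → ℝ) → ℂ) (Set.Icc 0 x)
      simp only [Function.comp] at i1 ⊢
      rw [i1, i2]
      exact i3
    refine c1.trans (c2.trans ?_)
    rw [c3]
    exact Filter.EventuallyEq.symm (hT u)
  -- J * P * J = P
  have hJPJ : J * P * J = P := by
    apply ContinuousLinearMap.ext; intro u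
    apply Lp.ext (μ := cubeMeasure d)
    have e0 : (J * P * J) u = J (P (J u)) := rfl
    rw [e0]
    have c1 : ((J (P (J u))) : (Fin d → ℝ) → ℂ) =ᵐ[(cubeMeasure d)]
        ((P (J u) : (Fin d → ℝ) → ℂ) ∘ σ) := hJcoe (P (J u))
    have c2 : ((P (J u) : (Fin d → ℝ) → ℂ) ∘ σ) =ᵐ[(cubeMeasure d)]
        ((fun _ => ∫ y, (J u : (Fin d → ℝ) → ℂ) y ∂(cubeMeasure d)) ∘ σ) :=
      hσmp.quasiMeasurePreserving.ae_eq_comp (hP (J u))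
    have c3 : ((fun _ : Fin d → ℝ => ∫ y, (J u : (Fin d → ℝ) → ℂ) y ∂(cubeMeasure d)) ∘ σ) =
        fun _ : Fin d → ℝ => ∫ y, (u : (Fin d → ℝ) → ℂ) y ∂(cubeMeasure d) := by
      funext x
      have i1 : ∫ y, (J u : (Fin d → ℝ) → ℂ) y ∂(cubeMeasure d) =
          ∫ y, ((u : (Fin d → ℝ) → ℂ) ∘ σ) y ∂(cubeMeasure d) := integral_congr_ae (hJcoe u)
      have i2 : ∫ y, ((u : (Fin d → ℝ) → ℂ)) (σ y) ∂(cubeMeasure d) =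
          ∫ y, (u : (Fin d → ℝ) → ℂ) y ∂(cubeMeasure d) :=
        hσmp.integral_comp hemb (u : (Fin d → ℝ) → ℂ)
      simp only [Function.comp] at i1 ⊢
      rw [i1, i2]
    refine c1.trans (c2.trans ?_)
    rw [c3]
    exact Filter.EventuallyEq.symm (hP u)
  exact ⟨Statement16Aux.key T Tstar P J hPP hJJ hJTJ hJTstarJ hJPJ,
    Statement16Aux.key2 T Tstar P hPP⟩
end
end
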